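/- Let γ: ℕ → ℝ, X: ℕ → ℝ, and Θ: ℕ₀ → ℝ satisfy Θ_n = Θ_{n-1} - γ_n(Θ_{n-1} - X_n) for all n ≥ 1, and let δ ∈ ℕ, c ∈ (0,∞) be such that for all n ≥ δ with min_{m ∈ {1,...,δ}} |Θ_{n-m}| ≥ c it holds that 0 ≤ γ_n ≤ 1 and |X_n| ≤ c. Then sup_{n ∈ ℕ₀} |Θ_n| ≤ (1 + sup_{n ∈ ℕ} |γ_n|)^δ · (max{c, |Θ_0|} + sup_{n ∈ ℕ} |X_n|). -/

import Mathlib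

open scoped ENNReal

/-- Chain lemma: iterating a `(1+g)`-contraction-type step bound. -/
lemma stmt0_chain (Θ : ℕ → ℝ) (g x K : ℝ) (hg : 0 ≤ g) (hx : 0 ≤ x)
    (hstep : ∀ i, 1 ≤ i → |Θ i| + x ≤ (1 + g) * (|Θ (i - 1)| + x))
    (a : ℕ) (ha : |Θ a| ≤ K) :
    ∀ j, |Θ (a + j)| + x ≤ (1 + g) ^ j * (K + x) := by
  intro j
  induction j with
  | zero => simpa using by linarith
  | succ j ih =>
      have h1 := hstep (a + j + 1) (by omega)
      have h2 : a + j + 1 - 1 = a + j := by omega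
      rw [h2] at h1
      have h3 : (1 + g) * (|Θ (a + j)| + x) ≤ (1 + g) * ((1 + g) ^ j * (K + x)) := by
        apply mul_le_mul_of_nonneg_left ih (by linarith)
      calc |Θ (a + j + 1)| + x ≤ (1 + g) * (|Θ (a + j)| + x) := h1
        _ ≤ (1 + g) * ((1 + g) ^ j * (K + x)) := h3
        _ = (1 + g) ^ (j + 1) * (K + x) := by ring

/-- Real-valued core bound. -/
lemma stmt0_real (γ X : ℕ → ℝ) (Θ : ℕ → ℝ) (δ : ℕ) (c g x : ℝ)
    (hδ : 1 ≤ δ) (hc : 0 < c) (hg : 0 ≤ g) (hx : 0 ≤ x)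
    (hγ : ∀ n, 1 ≤ n → |γ n| ≤ g) (hX : ∀ n, 1 ≤ n → |X n| ≤ x)
    (hrec : ∀ n, 1 ≤ n → Θ n = Θ (n - 1) - γ n * (Θ (n - 1) - X n))
    (hcond : ∀ n, δ ≤ n → (∀ m, 1 ≤ m → m ≤ δ → c ≤ |Θ (n - m)|) →
      0 ≤ γ n ∧ γ n ≤ 1 ∧ |X n| ≤ c) :
    ∀ n, |Θ n| ≤ (1 + g) ^ δ * (max c |Θ 0| + x) := by
  set K := max c |Θ 0| with hK
  have hcK : c ≤ K := le_max_left _ _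
  have hΘ0K : |Θ 0| ≤ K := le_max_right _ _
  have hK0 : 0 ≤ K := le_trans hc.le hcK
  have hpow1 : (1 : ℝ) ≤ (1 + g) ^ δ := one_le_pow₀ (by linarith)
  have hKx : 0 ≤ K + x := by linarith
  have hKxB : K + x ≤ (1 + g) ^ δ * (K + x) := le_mul_of_one_le_left hKx hpow1
  have hcB : c ≤ (1 + g) ^ δ * (K + x) := by linarith
  -- the crude one-step bound
  have hstep : ∀ i, 1 ≤ i → |Θ i| + x ≤ (1 + g) * (|Θ (i - 1)| + x) := by
    intro i hi
    have h1 : Θ i = (1 - γ i) * Θ (i - 1) + γ i * X i := by rw [hrec i hi]; ring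
    have h2 : |Θ i| ≤ |1 - γ i| * |Θ (i - 1)| + |γ i| * |X i| := by
      rw [h1]
      calc |(1 - γ i) * Θ (i - 1) + γ i * X i|
          ≤ |(1 - γ i) * Θ (i - 1)| + |γ i * X i| := abs_add_le _ _
        _ = |1 - γ i| * |Θ (i - 1)| + |γ i| * |X i| := by rw [abs_mul, abs_mul]
    have h3 : |1 - γ i| ≤ 1 + g := by
      have := hγ i hi
      have := abs_le.mp ((abs_le.mpr ⟨neg_abs_le _, le_abs_self _⟩ : |γ i| ≤ |γ i|))
      cases' abs_cases (1 - γ i) with h h <;>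
        cases' abs_cases (γ i) with h' h' <;> rw [h.1] <;> linarith [hγ i hi, h'.1 ▸ hγ i hi]
    have h4 : |γ i| * |X i| ≤ g * x :=
      mul_le_mul (hγ i hi) (hX i hi) (abs_nonneg _) hg
    have h5 : |1 - γ i| * |Θ (i - 1)| ≤ (1 + g) * |Θ (i - 1)| :=
      mul_le_mul_of_nonneg_right h3 (abs_nonneg _)
    nlinarith [abs_nonneg (Θ (i - 1))]
  intro n
  induction n using Nat.strong_induction_on with
  | _ n IH =>
    rcases Nat.eq_zero_or_pos n with rfl | hn
    · linarith
    · by_cases hwin : δ ≤ n ∧ ∀ m, 1 ≤ m → m ≤ δ → c ≤ |Θ (n - m)|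
      · -- good step: convex combination
        obtain ⟨hγ0, hγ1, hXc⟩ := hcond n hwin.1 hwin.2
        have h1 : Θ n = (1 - γ n) * Θ (n - 1) + γ n * X n := by rw [hrec n hn]; ring
        have h2 : |Θ n| ≤ (1 - γ n) * |Θ (n - 1)| + γ n * |X n| := by
          rw [h1]
          calc |(1 - γ n) * Θ (n - 1) + γ n * X n|
              ≤ |(1 - γ n) * Θ (n - 1)| + |γ n * X n| := abs_add_le _ _
            _ = |1 - γ n| * |Θ (n - 1)| + |γ n| * |X n| := by rw [abs_mul, abs_mul]
            _ = (1 - γ n) * |Θ (n - 1)| + γ n * |X n| := by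
                rw [abs_of_nonneg (by linarith : (0:ℝ) ≤ 1 - γ n), abs_of_nonneg hγ0]
        have hprev : |Θ (n - 1)| ≤ (1 + g) ^ δ * (K + x) := IH (n - 1) (by omega)
        nlinarith [abs_nonneg (Θ (n - 1))]
      · -- within δ steps of a small iterate (or of the start)
        push_neg at hwin
        by_cases hnδ : δ ≤ n
        · obtain ⟨m, hm1, hmδ, hsmall⟩ := hwin hnδ
          have hch := stmt0_chain Θ g x K hg hx hstep (n - m)
            (by linarith [hsmall.le.trans hcK] : |Θ (n - m)| ≤ K) m
          have hnm : n - m + m = n := by omega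
          rw [hnm] at hch
          have hmono : (1 + g) ^ m * (K + x) ≤ (1 + g) ^ δ * (K + x) :=
            mul_le_mul_of_nonneg_right (pow_le_pow_right₀ (by linarith) hmδ) hKx
          linarith
        · push_neg at hnδ
          have hch := stmt0_chain Θ g x K hg hx hstep 0 hΘ0K n
          rw [zero_add] at hch
          have hmono : (1 + g) ^ n * (K + x) ≤ (1 + g) ^ δ * (K + x) :=
            mul_le_mul_of_nonneg_right (pow_le_pow_right₀ (by linarith) hnδ.le) hKx
          linarith

theorem stmt0 (γ X : ℕ → ℝ) (Θ : ℕ → ℝ) (δ : ℕ) (c : ℝ)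
    (hδ : 1 ≤ δ) (hc : 0 < c)
    (hrec : ∀ n, 1 ≤ n → Θ n = Θ (n - 1) - γ n * (Θ (n - 1) - X n))
    (hcond : ∀ n, δ ≤ n → (∀ m, 1 ≤ m → m ≤ δ → c ≤ |Θ (n - m)|) →
      0 ≤ γ n ∧ γ n ≤ 1 ∧ |X n| ≤ c) :
    ⨆ n : ℕ, ENNReal.ofReal |Θ n| ≤
      (1 + ⨆ n : ℕ, ENNReal.ofReal |γ (n + 1)|) ^ δ *
        (ENNReal.ofReal (max c |Θ 0|) + ⨆ n : ℕ, ENNReal.ofReal |X (n + 1)|) := by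
  set Sγ := ⨆ n : ℕ, ENNReal.ofReal |γ (n + 1)| with hSγ
  set SX := ⨆ n : ℕ, ENNReal.ofReal |X (n + 1)| with hSX
  have hKpos : (0 : ℝ≥0∞) < ENNReal.ofReal (max c |Θ 0|) := by
    rw [ENNReal.ofReal_pos]; exact lt_of_lt_of_le hc (le_max_left _ _)
  by_cases hγtop : Sγ = ⊤
  · have : (1 + Sγ) ^ δ = ⊤ := by
      rw [hγtop, add_top, ENNReal.top_pow (by omega : δ ≠ 0)]
    rw [this, ENNReal.top_mul (by exact (lt_of_lt_of_le hKpos le_self_add).ne' : ENNReal.ofReal (max c |Θ 0|) + SX ≠ 0)]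
    exact le_top
  by_cases hXtop : SX = ⊤
  · have h1 : (1 : ℝ≥0∞) ≤ (1 + Sγ) ^ δ := one_le_pow_of_one_le' le_self_add δ
    rw [hXtop, add_top,
      ENNReal.mul_top (by intro h; rw [h] at h1; simp at h1)]
    exact le_top
  · set g := Sγ.toReal with hgdef
    set x := SX.toReal with hxdef
    have hg0 : 0 ≤ g := ENNReal.toReal_nonneg
    have hx0 : 0 ≤ x := ENNReal.toReal_nonneg
    have hγb : ∀ n, 1 ≤ n → |γ n| ≤ g := by
      intro n hn
      have h1 : ENNReal.ofReal |γ (n - 1 + 1)| ≤ Sγ := le_iSup (fun k => ENNReal.ofReal |γ (k + 1)|) (n - 1)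
      have h2 : n - 1 + 1 = n := by omega
      rw [h2] at h1
      have := ENNReal.toReal_mono hγtop h1
      rwa [ENNReal.toReal_ofReal (abs_nonneg _)] at this
    have hXb : ∀ n, 1 ≤ n → |X n| ≤ x := by
      intro n hn
      have h1 : ENNReal.ofReal |X (n - 1 + 1)| ≤ SX := le_iSup (fun k => ENNReal.ofReal |X (k + 1)|) (n - 1)
      have h2 : n - 1 + 1 = n := by omega
      rw [h2] at h1
      have := ENNReal.toReal_mono hXtop h1
      rwa [ENNReal.toReal_ofReal (abs_nonneg _)] at this
    have hkey := stmt0_real γ X Θ δ c g x hδ hc hg0 hx0 hγb hXb hrec hcond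
    have hγeq : Sγ = ENNReal.ofReal g := (ENNReal.ofReal_toReal hγtop).symm
    have hXeq : SX = ENNReal.ofReal x := (ENNReal.ofReal_toReal hXtop).symm
    have hRHS : (1 + Sγ) ^ δ * (ENNReal.ofReal (max c |Θ 0|) + SX) =
        ENNReal.ofReal ((1 + g) ^ δ * (max c |Θ 0| + x)) := by
      rw [hγeq, hXeq, ← ENNReal.ofReal_one, ← ENNReal.ofReal_add zero_le_one hg0,
        ← ENNReal.ofReal_pow (by linarith), ← ENNReal.ofReal_add (le_trans hc.le (le_max_left _ _)) hx0,
        ← ENNReal.ofReal_mul (by positivity)]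
    rw [hRHS]
    exact iSup_le fun n => ENNReal.ofReal_le_ofReal (hkey n)
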